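/- In the trace of the full graded Hecke category D*, the relation f · 1_{B_s} = 1_{B_s} · (s·f) + (f − s·f) holds for every polynomial f ∈ R and simple reflection s, where 1_{B_s} is the class of the identity of the Bott–Samelson object B_s and R = O(h) acts via endomorphisms of the monoidal unit; equivalently, writing 1_{B_s} = 1 + T_s, one has f·T_s = T_s·(s·f). -/

import Mathlib

set_option synthInstance.maxHeartbeats 1000000
set_option maxHeartbeats 1600000

open CategoryTheory MonoidalCategory

universe v u

/-- An (axiomatized) diagrammatic Hecke category `D = D(W,S,h)` of Elias–Williamson,
attached to a Coxeter system `(W,S)` and a realization over `k`: a graded `k`-linear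
monoidal category whose objects are the sequences of simple reflections (Bott–Samelson
objects), with `W` acting on the polynomial ring `R = END(𝟙)` of the realization, and
satisfying the one-colour diagrammatic relations used in this paper: the barbell relation
(5.1), the polynomial forcing relation (5.2), and the vanishing of the circle. -/
structure ElWiHecke (k : Type*) [CommRing k] {B W : Type*} [Group W]
    (Mx : CoxeterMatrix B) (cs : CoxeterSystem Mx W) where
  /-- the underlying category -/
  C : Type u
  [instCat : Category.{v} C]
  [instPre : Preadditive C]
  [instLin : Linear k C]
  [instMon : MonoidalCategory C]
  [instMonPre : MonoidalPreadditive C]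
  [instMonLin : MonoidalLinear k C]
  /-- the Bott–Samelson objects, indexed by sequences of simple reflections -/
  obj : List B → C
  obj_nil : obj [] = 𝟙_ C
  obj_append : ∀ w₁ w₂ : List B, obj (w₁ ++ w₂) = obj w₁ ⊗ obj w₂
  /-- the grading on morphism spaces -/
  grading : ∀ X Y : C, ℤ → Submodule k (X ⟶ Y)
  grading_internal : ∀ X Y : C, DirectSum.IsInternal (grading X Y)
  id_mem : ∀ X : C, 𝟙 X ∈ grading X X 0
  comp_mem : ∀ {X Y Z : C} {i j : ℤ} (f : X ⟶ Y) (g : Y ⟶ Z),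
    f ∈ grading X Y i → g ∈ grading Y Z j → f ≫ g ∈ grading X Z (i + j)
  tensor_mem : ∀ {X X' Y Y' : C} {i j : ℤ} (f : X ⟶ Y) (g : X' ⟶ Y'),
    f ∈ grading X Y i → g ∈ grading X' Y' j →
      (f ⊗ₘ g) ∈ grading (X ⊗ X') (Y ⊗ Y') (i + j)
  /-- the degree-zero part of `END(𝟙)` is `k` -/
  unit_deg_zero : ∀ f : 𝟙_ C ⟶ 𝟙_ C, f ∈ grading (𝟙_ C) (𝟙_ C) 0 →
    ∃ r : k, f = r • 𝟙 (𝟙_ C)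
  /-- the action of `W` on the polynomial ring `R = END(𝟙)` of the realization -/
  act : W →* RingAut (End (𝟙_ C))
  /-- the dot morphisms (degree `1`) -/
  dotIn : (s : B) → (𝟙_ C ⟶ obj [s])
  dotOut : (s : B) → (obj [s] ⟶ 𝟙_ C)
  dotIn_deg : ∀ s, dotIn s ∈ grading (𝟙_ C) (obj [s]) 1
  dotOut_deg : ∀ s, dotOut s ∈ grading (obj [s]) (𝟙_ C) 1
  /-- the simple roots `α_s ∈ R` -/
  alpha : B → (𝟙_ C ⟶ 𝟙_ C)
  /-- the barbell relation (5.1) -/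
  barbell : ∀ s, dotIn s ≫ dotOut s = alpha s
  /-- the Demazure (divided difference) operators `∂_s` -/
  dem : B → (𝟙_ C ⟶ 𝟙_ C) → (𝟙_ C ⟶ 𝟙_ C)
  dem_spec : ∀ (s : B) (f : 𝟙_ C ⟶ 𝟙_ C),
    dem s f ≫ alpha s = f - (show 𝟙_ C ⟶ 𝟙_ C from act (cs.simple s) f)
  /-- the polynomial forcing relation (5.2):
  `f·1_{B_s} = 1_{B_s}·(s·f) + ∂_s(f)·(broken strand)` -/
  forcing : ∀ (s : B) (f : 𝟙_ C ⟶ 𝟙_ C),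
    (λ_ (obj [s])).inv ≫ (f ▷ obj [s]) ≫ (λ_ (obj [s])).hom =
      (ρ_ (obj [s])).inv ≫
        (obj [s] ◁ (show 𝟙_ C ⟶ 𝟙_ C from act (cs.simple s) f)) ≫ (ρ_ (obj [s])).hom
      + dotOut s ≫ dem s f ≫ dotIn s
  /-- `B_s` is self-dual: cup and cap morphisms -/
  cup : (s : B) → (𝟙_ C ⟶ obj [s] ⊗ obj [s])
  cap : (s : B) → (obj [s] ⊗ obj [s] ⟶ 𝟙_ C)
  zigzag₁ : ∀ s, (ρ_ (obj [s])).inv ≫ (obj [s] ◁ cup s) ≫ (α_ _ _ _).inv ≫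
    (cap s ▷ obj [s]) ≫ (λ_ (obj [s])).hom = 𝟙 (obj [s])
  zigzag₂ : ∀ s, (λ_ (obj [s])).inv ≫ (cup s ▷ obj [s]) ≫ (α_ _ _ _).hom ≫
    (obj [s] ◁ cap s) ≫ (ρ_ (obj [s])).hom = 𝟙 (obj [s])
  /-- the closed circle of colour `s` is zero -/
  circle_zero : ∀ s, cup s ≫ cap s = 0

attribute [instance] ElWiHecke.instCat ElWiHecke.instPre ElWiHecke.instLin
  ElWiHecke.instMon ElWiHecke.instMonPre ElWiHecke.instMonLin

variable {k : Type*} [CommRing k] {B W : Type*} [Group W]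
  {Mx : CoxeterMatrix B} {cs : CoxeterSystem Mx W}

namespace ElWiHecke

variable (D : ElWiHecke k Mx cs)

/-- The Bott–Samelson object `B_s`. -/
def Bs (s : B) : D.C := D.obj [s]

/-- `⊕_X END(X)`. -/
noncomputable def HAll : Type _ := DirectSum D.C (fun X : D.C => X ⟶ X)

noncomputable instance : AddCommGroup D.HAll :=
  inferInstanceAs (AddCommGroup (DirectSum D.C (fun X : D.C => X ⟶ X)))

noncomputable instance : Module k D.HAll :=
  inferInstanceAs (Module k (DirectSum D.C (fun X : D.C => X ⟶ X)))

/-- The inclusion `END(X) → ⊕_X END(X)`. -/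
noncomputable def ofAll (X : D.C) (f : X ⟶ X) : D.HAll := by
  letI := Classical.decEq D.C
  exact show DirectSum D.C (fun X : D.C => X ⟶ X) from
    DirectSum.of (fun X : D.C => X ⟶ X) X f

/-- The commutators `fg - gf`. -/
noncomputable def commAll : Submodule k D.HAll :=
  Submodule.span k {x : D.HAll | ∃ (X Y : D.C) (f : X ⟶ Y) (g : Y ⟶ X),
    x = D.ofAll X (f ≫ g) - D.ofAll Y (g ≫ f)}

/-- The trace `Tr(D*)` of the all-degrees Hecke category. -/
noncomputable def TrAll : Type _ := D.HAll ⧸ D.commAll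

noncomputable instance : AddCommGroup D.TrAll := by
  unfold ElWiHecke.TrAll; infer_instance

noncomputable instance : Module k D.TrAll := by
  unfold ElWiHecke.TrAll; infer_instance

/-- The trace class of an endomorphism in `Tr(D*)`. -/
noncomputable def trAll (X : D.C) (f : X ⟶ X) : D.TrAll :=
  Submodule.Quotient.mk (D.ofAll X f)

end ElWiHecke

namespace ElWiHecke

variable (D : ElWiHecke k Mx cs)

/-- Left multiplication by a polynomial `f ∈ R` on the identity of `B_s`. -/
noncomputable def polyLeft (s : B) (f : 𝟙_ D.C ⟶ 𝟙_ D.C) : D.obj [s] ⟶ D.obj [s] :=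
  (λ_ (D.obj [s])).inv ≫ (f ▷ D.obj [s]) ≫ (λ_ (D.obj [s])).hom

/-- Right multiplication by a polynomial `g ∈ R` on the identity of `B_s`. -/
noncomputable def polyRight (s : B) (g : 𝟙_ D.C ⟶ 𝟙_ D.C) : D.obj [s] ⟶ D.obj [s] :=
  (ρ_ (D.obj [s])).inv ≫ (D.obj [s] ◁ g) ≫ (ρ_ (D.obj [s])).hom

/-- In the trace of the full graded Hecke category `D*`, the relation
`f · 1_{B_s} = 1_{B_s} · (s·f) + (f − s·f)` holds for every polynomial `f ∈ R = END(𝟙)`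
and every simple reflection `s` (equivalently, writing `1_{B_s} = 1 + T_s`, one has
`f·T_s = T_s·(s·f)` in `Tr(D*) = ℤ[W] ⋉ R`). -/
theorem trace_poly_forcing (s : B) (f : 𝟙_ D.C ⟶ 𝟙_ D.C) :
    D.trAll (D.obj [s]) (D.polyLeft s f) =
      D.trAll (D.obj [s]) (D.polyRight s (show 𝟙_ D.C ⟶ 𝟙_ D.C from D.act (cs.simple s) f))
      + D.trAll (𝟙_ D.C) (f - (show 𝟙_ D.C ⟶ 𝟙_ D.C from D.act (cs.simple s) f)) := by
  have key : ∀ (X Y : D.C) (a : X ⟶ Y) (b : Y ⟶ X),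
      D.trAll X (a ≫ b) = D.trAll Y (b ≫ a) := by
    intro X Y a b
    unfold ElWiHecke.trAll
    refine (Submodule.Quotient.eq (p := D.commAll)).mpr ?_
    exact Submodule.subset_span ⟨X, Y, a, b, rfl⟩
  have hadd : ∀ (X : D.C) (a b : X ⟶ X),
      D.trAll X (a + b) = D.trAll X a + D.trAll X b := by
    intro X a b
    letI := Classical.decEq D.C
    unfold ElWiHecke.trAll ElWiHecke.ofAll
    refine Eq.trans ?_ (Submodule.Quotient.mk_add (p := D.commAll))
    congr 1
    exact map_add (DirectSum.of (fun X : D.C => X ⟶ X) X) a b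
  rw [show D.polyLeft s f = D.polyRight s (D.act (cs.simple s) f)
      + D.dotOut s ≫ D.dem s f ≫ D.dotIn s from D.forcing s f]
  rw [hadd]
  congr 1
  rw [key _ _ (D.dotOut s) (D.dem s f ≫ D.dotIn s)]
  rw [Category.assoc, D.barbell s, D.dem_spec s f]

end ElWiHecke
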